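/- Let A, B be symmetric D×D real matrices with B positive definite, and suppose the GEP (A,B) has at least K strictly positive generalized eigenvalues λ_1 ≥ … ≥ λ_K > 0. Then the maximum over Ũ ∈ ℝ^{D×K} of trace(2 ŨᵀAŨ − (ŨᵀBŨ)(ŨᵀBŨ)) equals ∑_{k=1}^{K} λ_k². -/

import Mathlib

open Matrix

lemma trace_mul_diag {n : Type*} [Fintype n] [DecidableEq n] (f : n → ℝ) (M : Matrix n n ℝ) :
    Matrix.trace (M * Matrix.diagonal f) = ∑ i, M i i * f i := by
  simp [Matrix.trace, Matrix.diag, Matrix.mul_diagonal]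

lemma trace_mul_transpose_self_nonneg {m n : Type*} [Fintype n] [Fintype m] (M : Matrix m n ℝ) :
    0 ≤ Matrix.trace (M * Mᵀ) := by
  simp only [Matrix.trace, Matrix.diag, Matrix.mul_apply, Matrix.transpose_apply]
  exact Finset.sum_nonneg fun i _ => Finset.sum_nonneg fun j _ => mul_self_nonneg _

lemma card_ite_sum {D K : ℕ} (hK : K ≤ D) :
    (∑ i : Fin D, if (i : ℕ) < K then (1:ℝ) else 0) = K := by
  rw [Fin.sum_univ_eq_sum_range (fun i => if i < K then (1:ℝ) else 0)]
  rw [Finset.sum_ite, Finset.sum_const, Finset.sum_const]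
  have h : (Finset.range D).filter (fun i => i < K) = Finset.range K := by
    ext x; simp; omega
  simp [h]

lemma sum_weight_le {D K : ℕ} (hK : K ≤ D) (c d : Fin D → ℝ)
    (hc0 : ∀ i, 0 ≤ c i) (hc1 : ∀ i, c i ≤ 1) (hd0 : ∀ i, 0 ≤ d i) (hd : Antitone d)
    (hcs : ∑ i, c i ≤ K) :
    ∑ i, c i * d i ≤ ∑ i : Fin D, if (i : ℕ) < K then d i else 0 := by
  rcases Nat.eq_zero_or_pos K with hK0 | hK1
  · subst hK0
    have hsum0 : ∑ i, c i = 0 :=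
      le_antisymm (by simpa using hcs) (Finset.sum_nonneg fun i _ => hc0 i)
    have hall : ∀ i ∈ Finset.univ, c i = 0 :=
      (Finset.sum_eq_zero_iff_of_nonneg (fun i _ => hc0 i)).mp hsum0
    have : ∑ i, c i * d i = 0 := Finset.sum_eq_zero fun i hi => by rw [hall i hi, zero_mul]
    simp [this]
  · set kK : Fin D := ⟨K - 1, by omega⟩ with hkK
    set t : ℝ := d kK with ht
    have ht0 : 0 ≤ t := hd0 _
    have step : ∑ i, c i * d i ≤
        ∑ i : Fin D, ((if (i : ℕ) < K then d i else 0) + t * (c i - if (i : ℕ) < K then 1 else 0)) := by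
      apply Finset.sum_le_sum
      intro i _
      by_cases hi : (i : ℕ) < K
      · have hti : t ≤ d i := hd (by rw [Fin.le_def]; simp [hkK]; omega)
        have h1 := hc1 i
        simp only [hi, if_pos]
        nlinarith
      · have hti : d i ≤ t := hd (by rw [Fin.le_def]; simp [hkK]; omega)
        have h0 := hc0 i
        simp only [hi, if_neg, not_false_iff]
        nlinarith
    have expand : ∑ i : Fin D, ((if (i : ℕ) < K then d i else 0) + t * (c i - if (i : ℕ) < K then 1 else 0))
        = (∑ i : Fin D, if (i : ℕ) < K then d i else 0) + t * ((∑ i, c i) - K) := by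
      rw [Finset.sum_add_distrib, ← Finset.mul_sum]
      rw [Finset.sum_sub_distrib, card_ite_sum hK]
    have : t * ((∑ i, c i) - K) ≤ 0 := mul_nonpos_of_nonneg_of_nonpos ht0 (by linarith)
    calc ∑ i, c i * d i ≤ _ := step
      _ = _ := expand
      _ ≤ _ := by linarith

lemma core_diag {D K : ℕ} (hK : K ≤ D) (lam : Fin D → ℝ) (hlam : Antitone lam)
    (hpos : ∀ k : Fin D, (k : ℕ) < K → 0 < lam k) (X : Matrix (Fin D) (Fin K) ℝ)
    (μ : Fin K → ℝ) (hXX : Xᵀ * X = Matrix.diagonal μ) :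
    2 * Matrix.trace (Xᵀ * Matrix.diagonal lam * X) -
      Matrix.trace ((Xᵀ * X) * (Xᵀ * X)) ≤
    ∑ k : Fin D, if (k : ℕ) < K then (lam k) ^ 2 else 0 := by
  classical
  obtain ⟨ν, hν⟩ : ∃ f : Fin D → ℝ, f = fun k => max (lam k) 0 := ⟨_, rfl⟩
  have hν0 : ∀ k, 0 ≤ ν k := fun k => by rw [hν]; exact le_max_right _ _
  have hνlam : ∀ k, lam k ≤ ν k := fun k => by rw [hν]; exact le_max_left _ _
  have hνanti : Antitone ν := by
    intro a b hab; rw [hν]; exact max_le_max (hlam hab) le_rfl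
  obtain ⟨N, hNeq⟩ : ∃ M : Matrix (Fin D) (Fin D) ℝ, M = Matrix.diagonal ν := ⟨_, rfl⟩
  have hNt : Nᵀ = N := by rw [hNeq]; exact Matrix.diagonal_transpose ν
  obtain ⟨S, hSeq⟩ : ∃ M : Matrix (Fin D) (Fin D) ℝ, M = X * Xᵀ := ⟨_, rfl⟩
  have hSt : Sᵀ = S := by
    rw [hSeq, Matrix.transpose_mul, Matrix.transpose_transpose]
  have hμsq : ∀ j, μ j = ∑ i, X i j * X i j := by
    intro j
    have := congrFun (congrFun hXX j) j
    simpa [Matrix.mul_apply, Matrix.diagonal_apply_eq, Matrix.transpose_apply] using this.symm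
  have hμ0 : ∀ j, 0 ≤ μ j := fun j =>
    (hμsq j) ▸ Finset.sum_nonneg fun i _ => mul_self_nonneg _
  have hXzero : ∀ j, μ j = 0 → ∀ i, X i j = 0 := by
    intro j hj i
    have h : ∑ i, X i j * X i j = 0 := by rw [← hμsq j]; exact hj
    have := (Finset.sum_eq_zero_iff_of_nonneg
      (fun i (_ : i ∈ Finset.univ) => mul_self_nonneg (X i j))).mp h i (Finset.mem_univ i)
    nlinarith [this]
  obtain ⟨d', hd'⟩ : ∃ f : Fin K → ℝ, f = fun j => if μ j = 0 then 0 else (μ j)⁻¹ := ⟨_, rfl⟩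
  have hd'0 : ∀ j, 0 ≤ d' j := by
    intro j; rw [hd']
    by_cases hj : μ j = 0
    · simp [hj]
    · simp only [hj, if_false]
      exact inv_nonneg.mpr (hμ0 j)
  obtain ⟨Dm, hDm⟩ : ∃ M : Matrix (Fin K) (Fin K) ℝ, M = Matrix.diagonal d' := ⟨_, rfl⟩
  have hDmt : Dmᵀ = Dm := by rw [hDm]; exact Matrix.diagonal_transpose d'
  obtain ⟨P, hP⟩ : ∃ M : Matrix (Fin D) (Fin D) ℝ, M = X * Dm * Xᵀ := ⟨_, rfl⟩
  have hPt : Pᵀ = P := by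
    rw [hP, Matrix.transpose_mul, Matrix.transpose_mul, Matrix.transpose_transpose, hDmt,
      Matrix.mul_assoc]
  have hfun : (fun j => d' j * μ j * d' j) = d' := by
    funext j
    rw [hd']
    by_cases hj : μ j = 0
    · simp [hj]
    · simp only [hj, if_false]
      field_simp
  have hDμD : Dm * Matrix.diagonal μ * Dm = Dm := by
    rw [hDm, Matrix.diagonal_mul_diagonal, Matrix.diagonal_mul_diagonal]
    rw [show (fun i => d' i * μ i * d' i) = d' from hfun]
  have hPP : P * P = P := by
    calc P * P = X * Dm * (Xᵀ * X) * Dm * Xᵀ := by rw [hP]; simp only [Matrix.mul_assoc]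
      _ = X * (Dm * Matrix.diagonal μ * Dm) * Xᵀ := by rw [hXX]; simp only [Matrix.mul_assoc]
      _ = P := by rw [hDμD, hP]
  have hXE : X * (Dm * Matrix.diagonal μ) = X := by
    rw [hDm, Matrix.diagonal_mul_diagonal]
    ext i j
    rw [Matrix.mul_diagonal]
    by_cases hj : μ j = 0
    · simp [hd', hj, hXzero j hj i]
    · simp only [hd', hj, if_false]
      field_simp
  have hPS : P * S = S := by
    calc P * S = X * Dm * (Xᵀ * X) * Xᵀ := by rw [hP, hSeq]; simp only [Matrix.mul_assoc]
      _ = X * (Dm * Matrix.diagonal μ) * Xᵀ := by rw [hXX]; simp only [Matrix.mul_assoc]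
      _ = S := by rw [hXE, hSeq]
  have hSP : S * P = S := by
    have := congrArg Matrix.transpose hPS
    rwa [Matrix.transpose_mul, hSt, hPt] at this
  have hSd : ∀ i, 0 ≤ S i i := by
    intro i
    rw [hSeq, Matrix.mul_apply]
    exact Finset.sum_nonneg fun j _ => by
      rw [Matrix.transpose_apply]; exact mul_self_nonneg _
  have hPd0 : ∀ i, 0 ≤ P i i := by
    intro i
    have hPii : P i i = ∑ j, X i j * (d' j * X i j) := by
      rw [hP, Matrix.mul_assoc, Matrix.mul_apply]
      congr 1; funext j
      rw [hDm, Matrix.diagonal_mul, Matrix.transpose_apply]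
    rw [hPii]
    exact Finset.sum_nonneg fun j _ => by nlinarith [mul_self_nonneg (X i j), hd'0 j]
  have hPd1 : ∀ i, P i i ≤ 1 := by
    intro i
    have hsq : P i i = ∑ l, P i l * P i l := by
      conv_lhs => rw [← hPP]
      rw [Matrix.mul_apply]
      refine Finset.sum_congr rfl fun l _ => ?_
      congr 1
      calc P l i = Pᵀ i l := (Matrix.transpose_apply P i l).symm
        _ = P i l := by rw [hPt]
    have h1 : P i i * P i i ≤ ∑ l, P i l * P i l :=
      Finset.single_le_sum (f := fun l => P i l * P i l)
        (fun l _ => mul_self_nonneg _) (Finset.mem_univ i)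
    nlinarith [hPd0 i, hsq, h1]
  -- trace of P
  have htrP : (∑ i, P i i) ≤ (K : ℝ) := by
    have h1 : (∑ i, P i i) = Matrix.trace P := by simp [Matrix.trace, Matrix.diag]
    have h2 : Matrix.trace P = ∑ j, μ j * d' j := by
      calc Matrix.trace P = Matrix.trace ((X * Dm) * Xᵀ) := by rw [hP]
        _ = Matrix.trace (Xᵀ * (X * Dm)) := Matrix.trace_mul_comm _ _
        _ = Matrix.trace ((Xᵀ * X) * Dm) := by rw [Matrix.mul_assoc]
        _ = Matrix.trace (Matrix.diagonal μ * Dm) := by rw [hXX]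
        _ = ∑ j, μ j * d' j := by
            rw [hDm, Matrix.diagonal_mul_diagonal, Matrix.trace_diagonal]
    rw [h1, h2]
    calc ∑ j, μ j * d' j ≤ ∑ _j : Fin K, (1:ℝ) := by
          apply Finset.sum_le_sum
          intro j _
          rw [hd']
          by_cases hj : μ j = 0
          · simp [hj]
          · simp only [hj, if_false]
            rw [mul_inv_cancel₀ hj]
      _ = K := by simp
  -- objective rewriting
  have hT1 : Matrix.trace (Xᵀ * Matrix.diagonal lam * X) = Matrix.trace (S * Matrix.diagonal lam) := by
    calc Matrix.trace ((Xᵀ * Matrix.diagonal lam) * X)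
        = Matrix.trace (X * (Xᵀ * Matrix.diagonal lam)) := Matrix.trace_mul_comm _ _
      _ = Matrix.trace (S * Matrix.diagonal lam) := by rw [hSeq, Matrix.mul_assoc]
  have hT2 : Matrix.trace ((Xᵀ * X) * (Xᵀ * X)) = Matrix.trace (S * S) := by
    calc Matrix.trace ((Xᵀ * X) * (Xᵀ * X))
        = Matrix.trace (Xᵀ * (X * (Xᵀ * X))) := by simp only [Matrix.mul_assoc]
      _ = Matrix.trace ((X * (Xᵀ * X)) * Xᵀ) := Matrix.trace_mul_comm _ _
      _ = Matrix.trace (S * S) := by rw [hSeq]; simp only [Matrix.mul_assoc]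
  -- key inequality (i)
  have key1 : Matrix.trace (S * Matrix.diagonal lam) ≤ Matrix.trace (S * N) := by
    rw [hNeq, trace_mul_diag, trace_mul_diag]
    exact Finset.sum_le_sum fun i _ => mul_le_mul_of_nonneg_left (hνlam i) (hSd i)
  -- key inequality (ii)
  have hQ0 : 0 ≤ Matrix.trace ((P * N - S) * (P * N - S)ᵀ) :=
    trace_mul_transpose_self_nonneg _
  have hYt : (P * N - S)ᵀ = N * P - S := by
    rw [Matrix.transpose_sub, Matrix.transpose_mul, hPt, hNt, hSt]
  have hexp : Matrix.trace ((P * N - S) * (P * N - S)ᵀ)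
      = Matrix.trace ((P*N)*(N*P)) - Matrix.trace ((P*N)*S)
        - (Matrix.trace (S*(N*P)) - Matrix.trace (S*S)) := by
    rw [hYt, Matrix.sub_mul, Matrix.mul_sub, Matrix.mul_sub, Matrix.trace_sub,
      Matrix.trace_sub, Matrix.trace_sub]
  have e1 : Matrix.trace ((P*N)*(N*P)) = Matrix.trace (P*(N*N)) := by
    have h1 : (P*N)*(N*P) = (P*N*N)*P := by simp only [Matrix.mul_assoc]
    have h2 : P*(P*N*N) = (P*P)*(N*N) := by simp only [Matrix.mul_assoc]
    rw [h1, Matrix.trace_mul_comm, h2, hPP]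
  have e2 : Matrix.trace ((P*N)*S) = Matrix.trace (S*N) := by
    rw [Matrix.trace_mul_comm, ← Matrix.mul_assoc, hSP]
  have e3 : Matrix.trace (S*(N*P)) = Matrix.trace (S*N) := by
    have h1 : S*(N*P) = (S*N)*P := by simp only [Matrix.mul_assoc]
    have h2 : P*(S*N) = (P*S)*N := by simp only [Matrix.mul_assoc]
    rw [h1, Matrix.trace_mul_comm, h2, hPS]
  have key2 : 2 * Matrix.trace (S*N) - Matrix.trace (S*S) ≤ Matrix.trace (P*(N*N)) := by
    rw [hexp, e1, e2, e3] at hQ0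
    linarith
  -- key equality (iii)
  have key3 : Matrix.trace (P*(N*N)) = ∑ i, P i i * (ν i * ν i) := by
    rw [hNeq, Matrix.diagonal_mul_diagonal, trace_mul_diag]
  -- key inequality (iv)
  have key4 : ∑ i, P i i * (ν i * ν i) ≤ ∑ i : Fin D, if (i : ℕ) < K then ν i * ν i else 0 := by
    apply sum_weight_le hK _ _ hPd0 hPd1
    · exact fun i => mul_nonneg (hν0 i) (hν0 i)
    · intro a b hab
      exact mul_le_mul (hνanti hab) (hνanti hab) (hν0 b) (hν0 a)
    · exact htrP
  have key5 : (∑ i : Fin D, if (i : ℕ) < K then ν i * ν i else 0)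
      = ∑ k : Fin D, if (k : ℕ) < K then (lam k) ^ 2 else 0 := by
    refine Finset.sum_congr rfl fun i _ => ?_
    by_cases hi : (i : ℕ) < K
    · have hνi : ν i = lam i := by rw [hν]; exact max_eq_left (hpos i hi).le
      simp [hi, hνi, sq]
    · simp [hi]
  rw [hT1, hT2]
  calc 2 * Matrix.trace (S * Matrix.diagonal lam) - Matrix.trace (S * S)
      ≤ 2 * Matrix.trace (S * N) - Matrix.trace (S * S) := by linarith
    _ ≤ Matrix.trace (P*(N*N)) := key2
    _ = ∑ i, P i i * (ν i * ν i) := key3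
    _ ≤ ∑ i : Fin D, if (i : ℕ) < K then ν i * ν i else 0 := key4
    _ = _ := key5


lemma core_general {D K : ℕ} (hK : K ≤ D) (lam : Fin D → ℝ) (hlam : Antitone lam)
    (hpos : ∀ k : Fin D, (k : ℕ) < K → 0 < lam k) (W : Matrix (Fin D) (Fin K) ℝ) :
    2 * Matrix.trace (Wᵀ * Matrix.diagonal lam * W) -
      Matrix.trace ((Wᵀ * W) * (Wᵀ * W)) ≤
    ∑ k : Fin D, if (k : ℕ) < K then (lam k) ^ 2 else 0 := by
  classical
  have hGh : (Wᵀ * W).IsHermitian := by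
    rw [← Matrix.conjTranspose_eq_transpose_of_trivial]
    exact Matrix.isHermitian_conjTranspose_mul_self W
  obtain ⟨V, hVdef⟩ : ∃ M : Matrix (Fin K) (Fin K) ℝ,
      M = (hGh.eigenvectorUnitary : Matrix (Fin K) (Fin K) ℝ) := ⟨_, rfl⟩
  obtain ⟨μ, hμdef⟩ : ∃ f : Fin K → ℝ, f = hGh.eigenvalues := ⟨_, rfl⟩
  have hspec : Wᵀ * W = V * Matrix.diagonal μ * Vᵀ := by
    rw [hVdef, hμdef]
    have := hGh.spectral_theorem
    simpa [Matrix.star_eq_conjTranspose, Matrix.conjTranspose_eq_transpose_of_trivial, Function.comp] using this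
  have hV1 : Vᵀ * V = 1 := by
    rw [hVdef, ← Matrix.conjTranspose_eq_transpose_of_trivial]
    exact (Matrix.mem_unitaryGroup_iff').mp hGh.eigenvectorUnitary.2
  have hV2 : V * Vᵀ = 1 := mul_eq_one_comm.mp hV1
  have hconj : ∀ M : Matrix (Fin K) (Fin K) ℝ,
      Matrix.trace (Vᵀ * M * V) = Matrix.trace M := by
    intro M
    calc Matrix.trace ((Vᵀ * M) * V) = Matrix.trace (V * (Vᵀ * M)) := Matrix.trace_mul_comm _ _
      _ = Matrix.trace ((V * Vᵀ) * M) := by rw [Matrix.mul_assoc]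
      _ = Matrix.trace M := by rw [hV2, Matrix.one_mul]
  have hXX : (W * V)ᵀ * (W * V) = Matrix.diagonal μ := by
    calc (W * V)ᵀ * (W * V) = Vᵀ * ((Wᵀ * W) * V) := by
          rw [Matrix.transpose_mul]; simp only [Matrix.mul_assoc]
      _ = Vᵀ * ((V * Matrix.diagonal μ * Vᵀ) * V) := by rw [hspec]
      _ = (Vᵀ * V) * Matrix.diagonal μ * (Vᵀ * V) := by
          simp only [Matrix.mul_assoc]
      _ = Matrix.diagonal μ := by rw [hV1, Matrix.one_mul, Matrix.mul_one]
  have main := core_diag hK lam hlam hpos (W * V) μ hXX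
  have tA : (W * V)ᵀ * Matrix.diagonal lam * (W * V)
      = Vᵀ * (Wᵀ * Matrix.diagonal lam * W) * V := by
    rw [Matrix.transpose_mul]; simp only [Matrix.mul_assoc]
  have tB : ((W * V)ᵀ * (W * V)) * ((W * V)ᵀ * (W * V))
      = Vᵀ * ((Wᵀ * W) * (Wᵀ * W)) * V := by
    have hC : (W * V)ᵀ * (W * V) = Vᵀ * (Wᵀ * W) * V := by
      rw [Matrix.transpose_mul]; simp only [Matrix.mul_assoc]
    rw [hC]
    calc (Vᵀ * (Wᵀ * W) * V) * (Vᵀ * (Wᵀ * W) * V)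
        = Vᵀ * ((Wᵀ * W) * ((V * Vᵀ) * ((Wᵀ * W) * V))) := by simp only [Matrix.mul_assoc]
      _ = Vᵀ * ((Wᵀ * W) * (Wᵀ * W)) * V := by
          rw [hV2, Matrix.one_mul]; simp only [Matrix.mul_assoc]
  rw [tA, tB, hconj, hconj] at main
  exact main

theorem stmt_5 {D K : ℕ} (hK : K ≤ D)
    (A B : Matrix (Fin D) (Fin D) ℝ) (hA : A.IsSymm) (hB : B.PosDef)
    (Ufull : Matrix (Fin D) (Fin D) ℝ) (horth : Ufullᵀ * B * Ufull = 1)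
    (eig : Fin D → ℝ) (heig : Antitone eig)
    (hgep : A * Ufull = B * Ufull * Matrix.diagonal eig)
    (hpos : ∀ k : Fin D, (k : ℕ) < K → 0 < eig k) :
    IsGreatest
      (Set.range fun U : Matrix (Fin D) (Fin K) ℝ =>
        2 * Matrix.trace (Uᵀ * A * U) -
          Matrix.trace ((Uᵀ * B * U) * (Uᵀ * B * U)))
      (∑ k : Fin D, if (k : ℕ) < K then (eig k) ^ 2 else 0) := by
  classical
  have hAU : Ufullᵀ * A * Ufull = Matrix.diagonal eig := by
    calc Ufullᵀ * A * Ufull = Ufullᵀ * (A * Ufull) := by rw [Matrix.mul_assoc]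
      _ = Ufullᵀ * (B * Ufull * Matrix.diagonal eig) := by rw [hgep]
      _ = (Ufullᵀ * B * Ufull) * Matrix.diagonal eig := by simp only [Matrix.mul_assoc]
      _ = Matrix.diagonal eig := by rw [horth, Matrix.one_mul]
  have hsum : ∀ g : Fin D → ℝ,
      ∑ j : Fin K, g (Fin.castLE hK j) = ∑ k : Fin D, if (k : ℕ) < K then g k else 0 := by
    intro g
    rw [← Finset.sum_filter]
    have hmap : (Finset.univ.map ⟨Fin.castLE hK, Fin.castLE_injective hK⟩ : Finset (Fin D))
        = Finset.univ.filter (fun k : Fin D => (k : ℕ) < K) := by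
      ext k
      simp only [Finset.mem_map, Finset.mem_univ, true_and, Finset.mem_filter,
        Function.Embedding.coeFn_mk]
      constructor
      · rintro ⟨j, rfl⟩; exact j.isLt
      · intro hk; exact ⟨⟨(k : ℕ), hk⟩, by ext; simp⟩
    rw [← hmap, Finset.sum_map]
    rfl
  constructor
  · -- membership
    obtain ⟨P0, hP0⟩ : ∃ M : Matrix (Fin D) (Fin K) ℝ,
        M = Matrix.of (fun (i : Fin D) (j : Fin K) =>
          if (i : ℕ) = (j : ℕ) then Real.sqrt (eig i) else 0) := ⟨_, rfl⟩
    have hPcomp : ∀ e : Fin D → ℝ, P0ᵀ * (Matrix.diagonal e * P0)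
        = Matrix.diagonal (fun j : Fin K => Real.sqrt (eig (Fin.castLE hK j)) *
            (e (Fin.castLE hK j) * Real.sqrt (eig (Fin.castLE hK j)))) := by
      intro e
      ext j j'
      rw [Matrix.mul_apply]
      have hterm : ∀ i : Fin D, P0ᵀ j i * (Matrix.diagonal e * P0) i j'
          = (if (i : ℕ) = (j : ℕ) then Real.sqrt (eig i) else 0) *
            (e i * (if (i : ℕ) = (j' : ℕ) then Real.sqrt (eig i) else 0)) := by
        intro i
        rw [Matrix.transpose_apply, Matrix.diagonal_mul, hP0]
        simp [Matrix.of_apply]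
      rw [Finset.sum_congr rfl (fun i _ => hterm i)]
      rw [Finset.sum_eq_single (Fin.castLE hK j)]
      · have h1 : ((Fin.castLE hK j : Fin D) : ℕ) = (j : ℕ) := rfl
        by_cases hjj : j = j'
        · subst hjj
          rw [Matrix.diagonal_apply_eq]
          simp [h1]
        · have h3 : (j : ℕ) ≠ (j' : ℕ) := fun h => hjj (Fin.val_injective h)
          rw [Matrix.diagonal_apply_ne _ hjj]
          simp [h1, h3]
      · intro i _ hi
        have hne : (i : ℕ) ≠ (j : ℕ) := by
          intro h
          exact hi (Fin.ext (by simpa using h))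
        simp [hne]
      · intro h; exact absurd (Finset.mem_univ _) h
    have heig0 : ∀ j : Fin K, 0 ≤ eig (Fin.castLE hK j) := by
      intro j
      exact (hpos (Fin.castLE hK j) (by simpa using j.isLt)).le
    refine ⟨Ufull * P0, ?_⟩
    have hAform : (Ufull * P0)ᵀ * A * (Ufull * P0)
        = Matrix.diagonal (fun j : Fin K => eig (Fin.castLE hK j) * eig (Fin.castLE hK j)) := by
      have h1 : (Ufull * P0)ᵀ * A * (Ufull * P0)
          = P0ᵀ * (Matrix.diagonal eig * P0) := by
        rw [Matrix.transpose_mul]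
        calc (P0ᵀ * Ufullᵀ) * A * (Ufull * P0)
            = P0ᵀ * ((Ufullᵀ * A * Ufull) * P0) := by simp only [Matrix.mul_assoc]
          _ = P0ᵀ * (Matrix.diagonal eig * P0) := by rw [hAU]
      rw [h1, hPcomp]
      refine congrArg Matrix.diagonal (funext fun j => ?_)
      have hs : Real.sqrt (eig (Fin.castLE hK j)) * Real.sqrt (eig (Fin.castLE hK j))
          = eig (Fin.castLE hK j) := Real.mul_self_sqrt (heig0 j)
      calc Real.sqrt (eig (Fin.castLE hK j)) *
            (eig (Fin.castLE hK j) * Real.sqrt (eig (Fin.castLE hK j)))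
          = (Real.sqrt (eig (Fin.castLE hK j)) * Real.sqrt (eig (Fin.castLE hK j))) *
              eig (Fin.castLE hK j) := by ring
        _ = eig (Fin.castLE hK j) * eig (Fin.castLE hK j) := by rw [hs]
    have hBform : (Ufull * P0)ᵀ * B * (Ufull * P0)
        = Matrix.diagonal (fun j : Fin K => eig (Fin.castLE hK j)) := by
      have h1 : (Ufull * P0)ᵀ * B * (Ufull * P0)
          = P0ᵀ * (Matrix.diagonal (fun _ : Fin D => (1:ℝ)) * P0) := by
        rw [Matrix.transpose_mul]
        calc (P0ᵀ * Ufullᵀ) * B * (Ufull * P0)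
            = P0ᵀ * ((Ufullᵀ * B * Ufull) * P0) := by simp only [Matrix.mul_assoc]
          _ = P0ᵀ * (Matrix.diagonal (fun _ : Fin D => (1:ℝ)) * P0) := by
              rw [horth, Matrix.diagonal_one]
      rw [h1, hPcomp]
      refine congrArg Matrix.diagonal (funext fun j => ?_)
      rw [one_mul, Real.mul_self_sqrt (heig0 j)]
    show 2 * Matrix.trace ((Ufull * P0)ᵀ * A * (Ufull * P0)) -
        Matrix.trace (((Ufull * P0)ᵀ * B * (Ufull * P0)) * ((Ufull * P0)ᵀ * B * (Ufull * P0)))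
        = ∑ k : Fin D, if (k : ℕ) < K then (eig k) ^ 2 else 0
    rw [hAform, hBform, Matrix.diagonal_mul_diagonal]
    simp only [Matrix.trace_diagonal]
    rw [← hsum (fun k => eig k ^ 2)]
    have hss : ∑ j : Fin K, eig (Fin.castLE hK j) * eig (Fin.castLE hK j)
        = ∑ j : Fin K, eig (Fin.castLE hK j) ^ 2 :=
      Finset.sum_congr rfl fun j _ => (sq _).symm
    rw [hss]
    ring
  · -- upper bound
    rintro x ⟨U, rfl⟩
    have hdet : IsUnit Ufull.det := by
      have h := congrArg Matrix.det horth
      rw [Matrix.det_mul, Matrix.det_mul, Matrix.det_transpose, Matrix.det_one] at h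
      rcases eq_or_ne Ufull.det 0 with h0 | h0
      · rw [h0] at h; simp at h
      · exact isUnit_iff_ne_zero.mpr h0
    obtain ⟨W, hW⟩ : ∃ M : Matrix (Fin D) (Fin K) ℝ, M = Ufull⁻¹ * U := ⟨_, rfl⟩
    have hU : Ufull * W = U := by
      rw [hW, ← Matrix.mul_assoc, Matrix.mul_nonsing_inv _ hdet, Matrix.one_mul]
    have hAU2 : Uᵀ * A * U = Wᵀ * Matrix.diagonal eig * W := by
      rw [← hU, Matrix.transpose_mul]
      calc (Wᵀ * Ufullᵀ) * A * (Ufull * W)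
          = Wᵀ * ((Ufullᵀ * A * Ufull) * W) := by simp only [Matrix.mul_assoc]
        _ = Wᵀ * (Matrix.diagonal eig * W) := by rw [hAU]
        _ = Wᵀ * Matrix.diagonal eig * W := by rw [Matrix.mul_assoc]
    have hBU2 : Uᵀ * B * U = Wᵀ * W := by
      rw [← hU, Matrix.transpose_mul]
      calc (Wᵀ * Ufullᵀ) * B * (Ufull * W)
          = Wᵀ * ((Ufullᵀ * B * Ufull) * W) := by simp only [Matrix.mul_assoc]
        _ = Wᵀ * W := by rw [horth, Matrix.one_mul]
    show 2 * Matrix.trace (Uᵀ * A * U) -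
        Matrix.trace ((Uᵀ * B * U) * (Uᵀ * B * U)) ≤ _
    rw [hAU2, hBU2]
    exact core_general hK eig heig hpos W
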